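/- Suppose P = {f_1,…,f_n} is a Ruspini partition of continuous fuzzy sets, each f_i is min-convex and strongly normal with peak at t_i, where 0 = t_1 < ⋯ < t_n = 1 and f_i(t_j) = 0 for j ≠ i. Then for every i ∈ {1,…,n−1}, every x ∈ [t_i, t_{i+1}], and every j ∉ {i, i+1}, f_j(x) = 0. -/

import Mathlib

/-- For a Ruspini partition of continuous, min-convex, strongly normal fuzzy sets
with peaks `0 = t_1 < ⋯ < t_n = 1` and `f i (t j) = 0` for `j ≠ i`, every `f j`
with `j ∉ {i, i+1}` vanishes on `[t_i, t_{i+1}]`. -/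
theorem stmt9 (n : ℕ) (hn : 2 ≤ n) (f : Fin n → ℝ → ℝ)
    (hcont : ∀ i, ContinuousOn (f i) (Set.Icc 0 1))
    (hmap : ∀ i, Set.MapsTo (f i) (Set.Icc 0 1) (Set.Icc 0 1))
    (hruspini : ∀ x ∈ Set.Icc (0:ℝ) 1, ∑ i : Fin n, f i x = 1)
    (hconv : ∀ i, ∀ x ∈ Set.Icc (0:ℝ) 1, ∀ y ∈ Set.Icc (0:ℝ) 1,
      ∀ l ∈ Set.Icc (0:ℝ) 1, min (f i x) (f i y) ≤ f i (l * x + (1 - l) * y))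
    (t : Fin n → ℝ) (hmono : StrictMono t)
    (ht0 : t ⟨0, by omega⟩ = 0)
    (ht1 : t ⟨n - 1, by omega⟩ = 1)
    (hpeak : ∀ i, f i (t i) = 1)
    (hlt : ∀ i, ∀ y ∈ Set.Icc (0:ℝ) 1, y ≠ t i → f i y < 1)
    (hzero : ∀ i j : Fin n, j ≠ i → f i (t j) = 0) :
    ∀ i : Fin n, ∀ hi : (i : ℕ) + 1 < n,
      ∀ x ∈ Set.Icc (t i) (t ⟨(i : ℕ) + 1, hi⟩),
      ∀ j : Fin n, j ≠ i → j ≠ ⟨(i : ℕ) + 1, hi⟩ → f j x = 0 := by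
  intro i hi x hx j hj1 hj2
  have tmem : ∀ k : Fin n, t k ∈ Set.Icc (0:ℝ) 1 := by
    intro k
    constructor
    · rw [← ht0]; exact hmono.monotone (by simp [Fin.le_def])
    · rw [← ht1]; exact hmono.monotone (by simp [Fin.le_def]; omega)
  have hxI : x ∈ Set.Icc (0:ℝ) 1 := by
    constructor
    · exact le_trans (tmem i).1 hx.1
    · exact le_trans hx.2 (tmem _).2
  have hfx01 := hmap j hxI
  rcases lt_or_gt_of_ne (fun h : (j:ℕ) = (i:ℕ) => hj1 (Fin.ext h)) with hlt' | hgt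
  · -- j < i : use t_j < t_i ≤ x, f j (t i) = 0
    have htji : t j < t i := hmono (by exact hlt')
    have htjx : t j < x := lt_of_lt_of_le htji hx.1
    set l : ℝ := (x - t i) / (x - t j) with hl
    have hd : (0:ℝ) < x - t j := by linarith
    have hl0 : 0 ≤ l := div_nonneg (by linarith [hx.1]) hd.le
    have hl1 : l ≤ 1 := by
      rw [div_le_one hd]; linarith
    have key := hconv j (t j) (tmem j) x hxI l ⟨hl0, hl1⟩
    have heq : l * t j + (1 - l) * x = t i := by
      rw [hl]; field_simp [hd.ne']
      ring
    rw [heq, hzero j i (Ne.symm hj1), hpeak] at key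
    have : min 1 (f j x) = f j x := min_eq_right hfx01.2
    rw [this] at key
    linarith [hfx01.1]
  · -- j > i+1 : use x ≤ t_{i+1} < t_j
    have hj2' : (j:ℕ) ≠ (i:ℕ)+1 := fun h => hj2 (Fin.ext h)
    have hgt' : (i:ℕ)+1 < (j:ℕ) := by omega
    have htji : t ⟨(i:ℕ)+1, hi⟩ < t j := hmono (by exact hgt')
    have htjx : x < t j := lt_of_le_of_lt hx.2 htji
    set l : ℝ := (t j - t ⟨(i:ℕ)+1, hi⟩) / (t j - x) with hl
    have hd : (0:ℝ) < t j - x := by linarith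
    have hl0 : 0 ≤ l := div_nonneg (by linarith) hd.le
    have hl1 : l ≤ 1 := by
      rw [div_le_one hd]; linarith [hx.2]
    have key := hconv j x hxI (t j) (tmem j) l ⟨hl0, hl1⟩
    have heq : l * x + (1 - l) * t j = t ⟨(i:ℕ)+1, hi⟩ := by
      rw [hl]; field_simp [hd.ne']
      ring
    rw [heq, hzero j _ (Ne.symm hj2), hpeak] at key
    have : min (f j x) 1 = f j x := min_eq_left hfx01.2
    rw [this] at key
    linarith [hfx01.1]
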